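/- Consider a rooted finite tree built recursively as follows: a tree is either a single leaf (an original job), or consists of a root (artificial job) with a single child node (a slot) having exactly two subtrees of the same recursive form. Then for every leaf j' of the tree, there exists a bijection φ from the set of leaves other than j' to the set of slot nodes, such that for every leaf ℓ ≠ j', the slot φ(ℓ) is an ancestor-or-descendant-compatible slot, namely φ(ℓ) lies on the path structure so that ℓ is a leaf of one of the two subtrees below φ(ℓ). -/

import Mathlib

/-- A subsumption tree: either a single original job (leaf), or an artificial
job whose unique child is a slot with two subtrees. -/
inductive SubTree : Type
  | leaf : SubTree
  | node : SubTree → SubTree → SubTree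

/-- Positions (paths from the root) of the leaves of the tree. -/
def SubTree.leafPositions : SubTree → List (List Bool)
  | .leaf => [[]]
  | .node l r =>
      l.leafPositions.map (List.cons false) ++ r.leafPositions.map (List.cons true)

/-- Positions (paths from the root) of the slot nodes of the tree. -/
def SubTree.slotPositions : SubTree → List (List Bool)
  | .leaf => []
  | .node l r =>
      [] :: (l.slotPositions.map (List.cons false) ++ r.slotPositions.map (List.cons true))

lemma mem_sides {L : Bool → List (List Bool)} {b : Bool} {p : List Bool} :
    b :: p ∈ (L false).map (List.cons false) ++ (L true).map (List.cons true) ↔ p ∈ L b := by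
  cases b <;> simp

lemma exists_leaf : ∀ t : SubTree, ∃ p, p ∈ t.leafPositions
  | .leaf => ⟨[], by simp [SubTree.leafPositions]⟩
  | .node l r => by
      obtain ⟨p, hp⟩ := exists_leaf l
      exact ⟨false :: p,
        List.mem_append_left _ (List.mem_map_of_mem hp)⟩

lemma combine (c : Bool) (L S : Bool → List (List Bool)) (q' r0 : List Bool)
    (hr0 : r0 ∈ L (!c))
    (φ₁ : {ℓ : List Bool // ℓ ∈ L c ∧ ℓ ≠ q'} ≃ {s : List Bool // s ∈ S c})
    (h₁ : ∀ x, (φ₁ x : List Bool) <+: (x : List Bool))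
    (φ₂ : {ℓ : List Bool // ℓ ∈ L (!c) ∧ ℓ ≠ r0} ≃ {s : List Bool // s ∈ S (!c)})
    (h₂ : ∀ x, (φ₂ x : List Bool) <+: (x : List Bool)) :
    ∃ φ : {ℓ : List Bool // ℓ ∈ ((L false).map (List.cons false) ++ (L true).map (List.cons true)) ∧ ℓ ≠ c :: q'}
        ≃ {s : List Bool // s ∈ [] :: ((S false).map (List.cons false) ++ (S true).map (List.cons true))},
      ∀ ℓ, (φ ℓ : List Bool) <+: (ℓ : List Bool) := by
  refine ⟨{
    toFun := fun x => match x with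
      | ⟨[], hx⟩ => absurd hx.1 (by simp)
      | ⟨b :: ℓ', hx⟩ =>
        if hbc : b = c then
          ⟨c :: (φ₁ ⟨ℓ', by rw [← hbc]; exact mem_sides.mp hx.1,
              fun h => hx.2 (by rw [hbc, h])⟩ : List Bool),
            List.mem_cons_of_mem _ (mem_sides.mpr (φ₁ _).2)⟩
        else
          have hb : b = !c := by cases b <;> cases c <;> simp_all
          if hr : ℓ' = r0 then ⟨[], List.mem_cons_self⟩
          else
            ⟨(!c) :: (φ₂ ⟨ℓ', by rw [← hb]; exact mem_sides.mp hx.1, hr⟩ : List Bool),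
              List.mem_cons_of_mem _ (mem_sides.mpr (φ₂ _).2)⟩
    invFun := fun s => match s with
      | ⟨[], _⟩ => ⟨(!c) :: r0, mem_sides.mpr hr0,
          fun h => (Bool.not_ne_self c) (by injection h)⟩
      | ⟨b :: s', hs⟩ =>
        have hs' : s' ∈ S b := mem_sides.mp (by
          rcases List.mem_cons.mp hs with h | h
          · exact absurd h (by simp)
          · exact h)
        if hbc : b = c then
          ⟨c :: (φ₁.symm ⟨s', by rw [← hbc]; exact hs'⟩ : List Bool),
            mem_sides.mpr (φ₁.symm _).2.1,
            fun h => (φ₁.symm _).2.2 (by injection h)⟩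
        else
          have hb : b = !c := by cases b <;> cases c <;> simp_all
          ⟨(!c) :: (φ₂.symm ⟨s', by rw [← hb]; exact hs'⟩ : List Bool),
            mem_sides.mpr (φ₂.symm _).2.1,
            fun h => (Bool.not_ne_self c) (by injection h)⟩
    left_inv := ?_
    right_inv := ?_ }, ?_⟩
  · rintro ⟨ℓ, hℓ⟩
    match ℓ, hℓ with
    | [], hℓ => exact absurd hℓ.1 (by simp)
    | b :: ℓ', hℓ =>
      dsimp only
      by_cases hbc : b = c
      · rw [dif_pos hbc]
        dsimp only
        rw [dif_pos rfl]
        apply Subtype.ext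
        simp [hbc]
      · rw [dif_neg hbc]
        have hb : b = !c := by cases b <;> cases c <;> simp_all
        by_cases hr : ℓ' = r0
        · rw [dif_pos hr]
          dsimp only
          apply Subtype.ext
          simp [hb, hr]
        · rw [dif_neg hr]
          dsimp only
          rw [dif_neg (by simp)]
          apply Subtype.ext
          simp [hb]
  · rintro ⟨s, hs⟩
    match s, hs with
    | [], hs =>
      dsimp only
      rw [dif_neg (by simp), dif_pos rfl]
    | b :: s', hs =>
      dsimp only
      by_cases hbc : b = c
      · rw [dif_pos hbc]
        dsimp only
        rw [dif_pos rfl]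
        apply Subtype.ext
        simp [hbc]
      · rw [dif_neg hbc]
        dsimp only
        have hb : b = !c := by cases b <;> cases c <;> simp_all
        rw [dif_neg (by simp)]
        have hne := (φ₂.symm ⟨s', by
            rw [← hb]
            exact mem_sides.mp (by
              rcases List.mem_cons.mp hs with h | h
              · exact absurd h (by simp)
              · exact h)⟩).2.2
        rw [dif_neg hne]
        apply Subtype.ext
        simp [hb]
  · rintro ⟨ℓ, hℓ⟩
    match ℓ, hℓ with
    | [], hℓ => exact absurd hℓ.1 (by simp)
    | b :: ℓ', hℓ =>
      simp only [Equiv.coe_fn_mk]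
      by_cases hbc : b = c
      · rw [dif_pos hbc]
        exact (List.cons_prefix_cons).mpr ⟨hbc.symm, h₁ _⟩
      · rw [dif_neg hbc]
        have hb : b = !c := by cases b <;> cases c <;> simp_all
        by_cases hr : ℓ' = r0
        · rw [dif_pos hr]
          exact List.nil_prefix
        · rw [dif_neg hr]
          exact (List.cons_prefix_cons).mpr ⟨hb.symm, h₂ _⟩

/-- For every leaf `q` there is a bijection `φ` from the remaining leaves to the
slot nodes such that each leaf is assigned to a slot on its root path, i.e. a
slot whose subtree contains the leaf. -/
theorem stmt_12 (t : SubTree) (q : List Bool) (hq : q ∈ t.leafPositions) :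
    ∃ φ : {ℓ : List Bool // ℓ ∈ t.leafPositions ∧ ℓ ≠ q} ≃
          {s : List Bool // s ∈ t.slotPositions},
      ∀ ℓ, ((φ ℓ : List Bool)) <+: (ℓ : List Bool) := by
  induction t generalizing q with
  | leaf =>
    have hq' : q = [] := by simpa [SubTree.leafPositions] using hq
    subst hq'
    haveI h1 : IsEmpty {ℓ : List Bool // ℓ ∈ SubTree.leaf.leafPositions ∧ ℓ ≠ []} :=
      ⟨fun x => x.2.2 (by simpa [SubTree.leafPositions] using x.2.1)⟩
    haveI h2 : IsEmpty {s : List Bool // s ∈ SubTree.leaf.slotPositions} :=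
      ⟨fun x => by have := x.2; simp [SubTree.slotPositions] at this⟩
    exact ⟨Equiv.equivOfIsEmpty _ _, fun ℓ => isEmptyElim ℓ⟩
  | node l r ihl ihr =>
    rw [SubTree.leafPositions] at hq
    rcases List.mem_append.mp hq with h | h
    · obtain ⟨q', hq', rfl⟩ := List.mem_map.mp h
      obtain ⟨r0, hr0⟩ := exists_leaf r
      obtain ⟨φ₁, h₁⟩ := ihl q' hq'
      obtain ⟨φ₂, h₂⟩ := ihr r0 hr0
      exact combine false (fun b => cond b r.leafPositions l.leafPositions)
        (fun b => cond b r.slotPositions l.slotPositions) q' r0 hr0 φ₁ h₁ φ₂ h₂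
    · obtain ⟨q', hq', rfl⟩ := List.mem_map.mp h
      obtain ⟨r0, hr0⟩ := exists_leaf l
      obtain ⟨φ₁, h₁⟩ := ihr q' hq'
      obtain ⟨φ₂, h₂⟩ := ihl r0 hr0
      exact combine true (fun b => cond b r.leafPositions l.leafPositions)
        (fun b => cond b r.slotPositions l.slotPositions) q' r0 hr0 φ₁ h₁ φ₂ h₂
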